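/- Let D = D(1), ν ∈ C \ Z, and F_ν^{log} = F_ν ⊗ C[u] where the D(1)-action is the natural one on t^ν C[t,t^{−1},u] with u = log t (i.e., ∂ acts by the formal derivative treating ∂u/∂t = 1/t). Then the endomorphism ring End_D(F_ν^{log}) is isomorphic to the formal power series ring C[[z]], with z acting as ∂/∂u. -/

import Mathlib

/- The `D(1)`-module `F_ν^{log} = t^ν ℂ[t,t⁻¹] ⊗ ℂ[u]`, `u = log t`, with basis
`{t^{ν+k} u^m | k ∈ ℤ, m ∈ ℕ}` modelled by `(ℤ × ℕ) →₀ ℂ`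
(`single (k, m) 1` stands for `t^{ν+k} u^m`). -/

abbrev FnuLog := (ℤ × ℕ) →₀ ℂ

/-- The action of `t`: `t • t^{ν+k} u^m = t^{ν+k+1} u^m`. -/
noncomputable def tAct : FnuLog →ₗ[ℂ] FnuLog :=
  Finsupp.lmapDomain ℂ ℂ (fun p => (p.1 + 1, p.2))

/-- The action of `∂` (with `∂u/∂t = 1/t`):
`∂ • t^{ν+k} u^m = (ν+k) t^{ν+k-1} u^m + m t^{ν+k-1} u^{m-1}`. -/
noncomputable def dAct (ν : ℂ) : FnuLog →ₗ[ℂ] FnuLog :=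
  Finsupp.lsum ℂ fun p =>
    LinearMap.toSpanSingleton ℂ FnuLog
      ((ν + (p.1 : ℂ)) • Finsupp.single (p.1 - 1, p.2) (1 : ℂ) +
        (p.2 : ℂ) • Finsupp.single (p.1 - 1, p.2 - 1) (1 : ℂ))

/-- The operator `∂/∂u`: `t^{ν+k} u^m ↦ m t^{ν+k} u^{m-1}`. -/
noncomputable def duAct : Module.End ℂ FnuLog :=
  Finsupp.lsum ℂ fun p =>
    LinearMap.toSpanSingleton ℂ FnuLog
      ((p.2 : ℂ) • Finsupp.single (p.1, p.2 - 1) (1 : ℂ))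


open Finsupp Finset PowerSeries

lemma tAct_single (k : ℤ) (m : ℕ) (c : ℂ) :
    tAct (single (k,m) c) = single (k+1,m) c := by
  simp [tAct, Finsupp.mapDomain_single]

lemma dAct_single (ν : ℂ) (k : ℤ) (m : ℕ) :
    dAct ν (single (k,m) 1) =
      (ν+(k:ℂ)) • single (k-1,m) 1 + (m:ℂ) • single (k-1,m-1) 1 := by
  simp [dAct]

lemma duAct_single (k : ℤ) (m : ℕ) :
    duAct (single (k,m) 1) = (m:ℂ) • single (k,m-1) 1 := by
  simp [duAct]

lemma descFactorial_mul (m n : ℕ) :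
    m.descFactorial (n+1) = m * (m-1).descFactorial n := by
  cases m with
  | zero => simp
  | succ m' => rw [Nat.succ_descFactorial_succ]; simp

lemma duAct_pow (k : ℤ) (m n : ℕ) :
    (duAct^n) (single (k,m) 1) = ((m.descFactorial n : ℕ) : ℂ) • single (k,m-n) 1 := by
  induction n with
  | zero => simp
  | succ n ih =>
    rw [pow_succ', Module.End.mul_apply, ih, map_smul, duAct_single, smul_smul,
      ← Nat.cast_mul, mul_comm (m.descFactorial n), ← Nat.descFactorial_succ,
      Nat.sub_sub]

noncomputable def phiFun (f : PowerSeries ℂ) : Module.End ℂ FnuLog :=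
  Finsupp.lsum ℂ fun p =>
    LinearMap.toSpanSingleton ℂ FnuLog
      (∑ n ∈ range (p.2+1), (PowerSeries.coeff n f) • ((duAct^n) (single (p.1,p.2) 1)))

lemma phiFun_single (f : PowerSeries ℂ) (k : ℤ) (m : ℕ) :
    phiFun f (single (k,m) 1) =
      ∑ n ∈ range (m+1), (PowerSeries.coeff n f) • ((duAct^n) (single (k,m) 1)) := by
  simp [phiFun]

lemma duApowzero (k : ℤ) (m n : ℕ) (h : m < n) : (duAct^n) (single (k,m) 1) = 0 := by
  rw [duAct_pow, Nat.descFactorial_eq_zero_iff_lt.2 h]; simp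

lemma phiFun_single_ext (f : PowerSeries ℂ) (k : ℤ) (m M : ℕ) (h : m ≤ M) :
    phiFun f (single (k,m) 1) =
      ∑ n ∈ range (M+1), (PowerSeries.coeff n f) • ((duAct^n) (single (k,m) 1)) := by
  rw [phiFun_single]
  apply Finset.sum_subset
  · intro x hx; simp only [mem_range] at *; omega
  · intro x _ hx
    simp only [mem_range, not_lt] at hx
    rw [duApowzero k m x (by omega), smul_zero]

lemma endExt {A B : Module.End ℂ FnuLog}
    (h : ∀ k m, A (single (k,m) 1) = B (single (k,m) 1)) : A = B := by
  apply Finsupp.lhom_ext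
  intro p b
  have hb : (single p b : FnuLog) = b • single p 1 := by simp
  rw [hb, map_smul, map_smul]
  obtain ⟨k, m⟩ := p
  rw [h]

lemma tAct_commute (f : PowerSeries ℂ) : tAct * phiFun f = phiFun f * tAct := by
  apply endExt
  intro k m
  rw [Module.End.mul_apply, Module.End.mul_apply, tAct_single, phiFun_single,
    phiFun_single, map_sum]
  refine Finset.sum_congr rfl fun n _ => ?_
  rw [map_smul, duAct_pow, duAct_pow, map_smul, tAct_single]

lemma dAct_duAct_commute (ν : ℂ) : Commute (dAct ν : Module.End ℂ FnuLog) duAct := by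
  apply endExt
  intro k m
  rw [Module.End.mul_apply, Module.End.mul_apply, duAct_single, dAct_single, map_smul,
    dAct_single, map_add, map_smul, map_smul, duAct_single, duAct_single]
  rw [smul_add, smul_smul, smul_smul, smul_smul, mul_comm]

lemma dAct_pow_commute (ν : ℂ) (n : ℕ) :
    (dAct ν : Module.End ℂ FnuLog) * duAct^n = duAct^n * dAct ν :=
  ((dAct_duAct_commute ν).pow_right n).eq

lemma dAct_commute (ν : ℂ) (f : PowerSeries ℂ) :
    dAct ν * phiFun f = phiFun f * dAct ν := by
  apply endExt
  intro k m
  rw [Module.End.mul_apply, Module.End.mul_apply, phiFun_single, map_sum, dAct_single,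
    map_add, map_smul, map_smul,
    phiFun_single_ext f (k-1) m m le_rfl,
    phiFun_single_ext f (k-1) (m-1) m (Nat.sub_le m 1),
    Finset.smul_sum, Finset.smul_sum, ← Finset.sum_add_distrib]
  refine Finset.sum_congr rfl fun n _ => ?_
  rw [map_smul]
  have : (dAct ν) ((duAct^n) (single (k,m) 1)) = (duAct^n) ((dAct ν) (single (k,m) 1)) := by
    rw [← Module.End.mul_apply, ← Module.End.mul_apply, dAct_pow_commute]
  rw [this, dAct_single, map_add, map_smul, map_smul, smul_add]
  rw [smul_smul, smul_smul, smul_smul, smul_smul]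
  congr 1
  · congr 1; ring
  · congr 1; ring

lemma phiFun_add (f g : PowerSeries ℂ) : phiFun (f+g) = phiFun f + phiFun g := by
  apply endExt
  intro k m
  rw [LinearMap.add_apply, phiFun_single, phiFun_single, phiFun_single,
    ← Finset.sum_add_distrib]
  refine Finset.sum_congr rfl fun n _ => ?_
  rw [map_add, add_smul]

lemma phiFun_one : phiFun 1 = 1 := by
  apply endExt
  intro k m
  rw [phiFun_single, Module.End.one_apply]
  rw [Finset.sum_eq_single 0]
  · simp
  · intro n _ hn
    rw [PowerSeries.coeff_one, if_neg hn, zero_smul]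
  · intro h; simp at h

lemma phiFun_algebraMap (c : ℂ) : phiFun ((PowerSeries.C) c) = c • 1 := by
  apply endExt
  intro k m
  rw [phiFun_single]
  rw [Finset.sum_eq_single 0]
  · simp
  · intro n _ hn
    rw [PowerSeries.coeff_C, if_neg hn, zero_smul]
  · intro h; simp at h

lemma phiFun_mul (f g : PowerSeries ℂ) : phiFun (f * g) = phiFun f * phiFun g := by
  apply endExt
  intro k m
  rw [Module.End.mul_apply, phiFun_single]
  -- RHS first
  rw [phiFun_single, map_sum]
  have hR : ∀ j ∈ range (m+1),
      phiFun f ((PowerSeries.coeff j g) • (duAct^j) (single (k,m) 1)) =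
      ∑ i ∈ range (m+1), (PowerSeries.coeff i f * PowerSeries.coeff j g) •
        (duAct^(i+j)) (single (k,m) 1) := by
    intro j _
    rw [map_smul, duAct_pow, map_smul, phiFun_single_ext f k (m-j) m (Nat.sub_le m j),
      Finset.smul_sum, Finset.smul_sum]
    refine Finset.sum_congr rfl fun i _ => ?_
    rw [pow_add, Module.End.mul_apply, duAct_pow k m j, map_smul]
    rw [smul_smul, smul_smul, smul_smul]
    congr 1
    ring
  rw [Finset.sum_congr rfl hR]
  -- LHS
  have hL : ∀ n ∈ range (m+1),
      (PowerSeries.coeff n (f*g)) • (duAct^n) (single (k,m) 1) =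
      ∑ i ∈ range (n+1), (PowerSeries.coeff i f * PowerSeries.coeff (n-i) g) •
        (duAct^n) (single (k,m) 1) := by
    intro n _
    rw [PowerSeries.coeff_mul,
      Finset.Nat.sum_antidiagonal_eq_sum_range_succ
        (fun i j => PowerSeries.coeff i f * PowerSeries.coeff j g) n,
      Finset.sum_smul]
  rw [Finset.sum_congr rfl hL]
  -- now a triangular sum
  have flip := Finset.sum_range_diag_flip (m+1)
    (fun i j => (PowerSeries.coeff i f * PowerSeries.coeff j g) •
        (duAct^(i+j)) (single (k,m) 1))
  have hL2 : ∀ n ∈ range (m+1),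
      (∑ i ∈ range (n+1), (PowerSeries.coeff i f * PowerSeries.coeff (n-i) g) •
        (duAct^n) (single (k,m) 1)) =
      ∑ i ∈ range (n+1), (PowerSeries.coeff i f * PowerSeries.coeff (n-i) g) •
        (duAct^(i+(n-i))) (single (k,m) 1) := by
    intro n _
    refine Finset.sum_congr rfl fun i hi => ?_
    simp only [mem_range] at hi
    rw [Nat.add_sub_cancel' (Nat.lt_succ_iff.mp hi)]
  rw [Finset.sum_congr rfl hL2, flip]
  conv_rhs => rw [Finset.sum_comm]
  refine Finset.sum_congr rfl fun i hi => ?_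
  apply Finset.sum_subset
  · intro x hx; simp only [mem_range] at *; omega
  · intro j _ hj
    simp only [mem_range] at hi hj
    rw [duApowzero k m (i+j) (by omega), smul_zero]

lemma phiFun_eval (f : PowerSeries ℂ) (n : ℕ) :
    (phiFun f (single ((0:ℤ),n) 1)) ((0:ℤ),(0:ℕ)) =
      PowerSeries.coeff n f * (n.factorial : ℂ) := by
  rw [phiFun_single, Finsupp.finset_sum_apply]
  rw [Finset.sum_eq_single n]
  · rw [duAct_pow, Finsupp.smul_apply, Finsupp.smul_apply, Nat.sub_self,
      Finsupp.single_apply, if_pos rfl, Nat.descFactorial_self]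
    simp [mul_comm]
  · intro j hj hjn
    simp only [mem_range] at hj
    rw [duAct_pow, Finsupp.smul_apply, Finsupp.smul_apply, Finsupp.single_apply,
      if_neg (by simp; omega), smul_zero, smul_zero]
  · intro h; simp at h

lemma phiFun_injective : Function.Injective phiFun := by
  intro f g h
  ext n
  have := congrArg (fun A : Module.End ℂ FnuLog => (A (single ((0:ℤ),n) 1)) ((0:ℤ),(0:ℕ))) h
  simp only [phiFun_eval] at this
  have hfac : ((n.factorial : ℂ)) ≠ 0 := by
    exact_mod_cast Nat.cast_ne_zero.mpr (Nat.factorial_ne_zero n)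
  exact mul_right_cancel₀ hfac this

lemma phiFun_X : phiFun PowerSeries.X = duAct := by
  apply endExt
  intro k m
  rw [phiFun_single, duAct_single]
  have : ∀ n ∈ range (m+1), (PowerSeries.coeff n (PowerSeries.X : PowerSeries ℂ)) • ((duAct^n) (single (k,m) 1)) =
      if n = 1 then (duAct^1) (single (k,m) 1) else 0 := by
    intro n _
    rw [PowerSeries.coeff_X]
    split_ifs with h
    · rw [h, one_smul]
    · rw [zero_smul]
  rw [Finset.sum_congr rfl this, Finset.sum_ite_eq' (range (m+1)) 1
    (fun _ => (duAct^1) (single (k,m) 1))]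
  split_ifs with h
  · rw [pow_one, duAct_single]
  · simp only [mem_range] at h
    have hm : m = 0 := by omega
    subst hm
    simp

lemma theta_single (ν : ℂ) (k : ℤ) (m : ℕ) :
    (tAct * dAct ν) (single (k,m) 1) =
      (ν+(k:ℂ)) • single (k,m) 1 + (m:ℂ) • single (k,m-1) 1 := by
  rw [Module.End.mul_apply, dAct_single, map_add, map_smul, map_smul, tAct_single,
    tAct_single, sub_add_cancel]

lemma theta_apply (ν : ℂ) (y : FnuLog) (a : ℤ) (b : ℕ) :
    ((tAct * dAct ν) y) (a,b) = (ν + a) * y (a,b) + ((b+1 : ℕ) : ℂ) * y (a, b+1) := by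
  induction y using Finsupp.induction_linear with
  | zero => simp
  | add f g hf hg =>
    rw [map_add, Finsupp.add_apply, hf, hg, Finsupp.add_apply, Finsupp.add_apply]
    ring
  | single p c =>
    obtain ⟨q, n⟩ := p
    have hc : (single (q,n) c : FnuLog) = c • single (q,n) 1 := by simp
    rw [hc, map_smul, Finsupp.smul_apply, theta_single]
    simp only [Finsupp.add_apply, Finsupp.smul_apply, Finsupp.single_apply,
      smul_eq_mul, Prod.mk.injEq]
    split_ifs with h1 h2 h3 h3 h2 h3 h3
    all_goals try (exfalso; omega)
    all_goals try ring

    · obtain ⟨rfl, rfl⟩ := h1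
      have hb : n = 0 := by omega
      subst hb
      norm_num
    · obtain ⟨rfl, rfl⟩ := h1
      ring
    · obtain ⟨rfl, rfl⟩ := h3
      push_cast
      ring

lemma ker_theta (ν : ℂ) (k : ℤ) (y : FnuLog)
    (hy : (tAct * dAct ν) y = (ν + (k:ℂ)) • y) :
    y = y (k,0) • single (k,0) 1 := by
  have key : ∀ (a : ℤ) (b : ℕ), ((b+1 : ℕ) : ℂ) * y (a,b+1) = ((k : ℂ) - a) * y (a,b) := by
    intro a b
    have h1 := congrArg (fun z : FnuLog => z (a,b)) hy
    simp only [theta_apply, Finsupp.smul_apply, smul_eq_mul] at h1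
    have : (ν + a) * y (a,b) + ((b+1 : ℕ) : ℂ) * y (a, b+1) = (ν + k) * y (a,b) := h1
    push_cast at this ⊢
    linear_combination this
  have hfib : ∀ a : ℤ, a ≠ k → ∀ b, y (a,b) = 0 := by
    intro a ha
    set M := (y.support.sup fun p : ℤ × ℕ => p.2) + 1 with hM
    have htop : ∀ b, M ≤ b → y (a,b) = 0 := by
      intro b hb
      by_contra h
      have h1 : (a,b) ∈ y.support := Finsupp.mem_support_iff.mpr h
      have h2 := Finset.le_sup (f := fun p : ℤ × ℕ => p.2) h1
      simp only at h2
      omega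
    have hka : (k:ℂ) - a ≠ 0 := by
      intro h0
      apply ha
      have : (a:ℂ) = (k:ℂ) := by linear_combination -h0
      exact_mod_cast this
    have hstep : ∀ b, y (a, b+1) = 0 → y (a,b) = 0 := by
      intro b hb
      have h2 := key a b
      rw [hb, mul_zero] at h2
      exact (mul_eq_zero.mp h2.symm).resolve_left hka
    have hd : ∀ d b, M ≤ b + d → y (a,b) = 0 := by
      intro d
      induction d with
      | zero => intro b hb; exact htop b (by omega)
      | succ d ih => intro b _; exact hstep b (ih (b+1) (by omega))
    intro b
    exact hd M b (by omega)
  have hk0 : ∀ b, y (k, b+1) = 0 := by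
    intro b
    have h2 := key k b
    rw [sub_self, zero_mul] at h2
    have hb1 : ((b+1 : ℕ) : ℂ) ≠ 0 := by
      exact Nat.cast_ne_zero.mpr (by omega)
    exact (mul_eq_zero.mp h2).resolve_left hb1
  ext p
  obtain ⟨a, b⟩ := p
  rw [Finsupp.smul_apply, Finsupp.single_apply]
  by_cases ha : a = k
  · subst ha
    cases b with
    | zero => simp
    | succ b =>
      rw [hk0 b, if_neg (by simp), smul_zero]
  · rw [hfib a (by omega) b, if_neg (by simp; omega), smul_zero]

lemma phiFun_zero : phiFun 0 = 0 := by
  apply endExt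
  intro k m
  rw [phiFun_single]
  simp

noncomputable def phiAlg : PowerSeries ℂ →ₐ[ℂ] Module.End ℂ FnuLog where
  toFun := phiFun
  map_one' := phiFun_one
  map_mul' := phiFun_mul
  map_zero' := phiFun_zero
  map_add' := phiFun_add
  commutes' := fun c => by
    show phiFun (PowerSeries.C c) = algebraMap ℂ (Module.End ℂ FnuLog) c
    rw [phiFun_algebraMap, Algebra.algebraMap_eq_smul_one]

lemma level_zero (ν : ℂ) (R : Module.End ℂ FnuLog)
    (hRt : tAct * R = R * tAct)
    (hRθ : (tAct * dAct ν) * R = R * (tAct * dAct ν))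
    (m : ℕ)
    (hlow : ∀ k : ℤ, (m:ℂ) • R (single (k,m-1) 1) = 0)
    (h0 : (R (single ((0:ℤ),m) 1)) ((0:ℤ),(0:ℕ)) = 0) :
    ∀ k : ℤ, R (single (k,m) 1) = 0 := by
  have hker : ∀ k : ℤ, R (single (k,m) 1) =
      (R (single (k,m) 1)) (k,0) • single (k,0) 1 := by
    intro k
    apply ker_theta
    have hcomm : (tAct * dAct ν) (R (single (k,m) 1)) =
        R ((tAct * dAct ν) (single (k,m) 1)) := by
      rw [← Module.End.mul_apply, hRθ, Module.End.mul_apply]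
    rw [hcomm, theta_single, map_add, map_smul, map_smul, hlow k, add_zero]
  have hstep : ∀ k : ℤ, (R (single (k+1,m) 1)) (k+1,(0:ℕ)) =
      (R (single (k,m) 1)) (k,(0:ℕ)) := by
    intro k
    have h1 : R (single (k+1,m) 1) = tAct (R (single (k,m) 1)) := by
      rw [← tAct_single k m 1, ← Module.End.mul_apply, ← hRt, Module.End.mul_apply]
    have h2 : R (single (k+1,m) 1) =
        (R (single (k,m) 1)) (k,(0:ℕ)) • single (k+1,(0:ℕ)) 1 := by
      rw [h1, hker k, map_smul, tAct_single]
      simp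
    have h3 := congrArg (fun z : FnuLog => z (k+1,(0:ℕ))) h2
    simpa using h3
  have hzero : ∀ k : ℤ, (R (single (k,m) 1)) (k,(0:ℕ)) = 0 := by
    intro k
    induction k using Int.induction_on with
    | zero => exact h0
    | succ i ih => exact (hstep i).trans ih
    | pred i ih =>
      have h := hstep (-(i:ℤ)-1)
      rw [show (-(i:ℤ)-1+1) = -(i:ℤ) by ring] at h
      exact h.symm.trans ih
  intro k
  rw [hker k, hzero k, zero_smul]


/-- for `ν ∉ ℤ`, the endomorphism ring `End_{D(1)}(F_ν^{log})`
(= the centralizer of the `t`- and `∂`-actions inside all ℂ-linear endomorphisms)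
is isomorphic to the power series ring `ℂ[[z]]`, with `z` acting as `∂/∂u`. -/
theorem endRing_FnuLog_powerSeries (ν : ℂ) (hν : ∀ k : ℤ, ν ≠ (k : ℂ)) :
    ∃ e : PowerSeries ℂ ≃ₐ[ℂ]
        (Subalgebra.centralizer ℂ
          ({(tAct : Module.End ℂ FnuLog), (dAct ν : Module.End ℂ FnuLog)} :
            Set (Module.End ℂ FnuLog))),
      ((e (PowerSeries.X) : _) : Module.End ℂ FnuLog) = duAct := by
  classical
  have hmem : ∀ f : PowerSeries ℂ, phiAlg f ∈ Subalgebra.centralizer ℂ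
      ({(tAct : Module.End ℂ FnuLog), (dAct ν : Module.End ℂ FnuLog)} :
        Set (Module.End ℂ FnuLog)) := by
    intro f
    rw [Subalgebra.mem_centralizer_iff]
    intro g hg
    simp only [Set.mem_insert_iff, Set.mem_singleton_iff] at hg
    rcases hg with rfl | rfl
    · exact tAct_commute f
    · exact dAct_commute ν f
  set Φ' := AlgHom.codRestrict phiAlg _ hmem with hΦ'
  have hinj : Function.Injective Φ' := by
    intro f g h
    apply phiFun_injective
    exact congrArg Subtype.val h
  have hsurj : Function.Surjective Φ' := by
    rintro ⟨T, hT⟩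
    rw [Subalgebra.mem_centralizer_iff] at hT
    have ht : tAct * T = T * tAct := hT tAct (by left; rfl)
    have hd : dAct ν * T = T * dAct ν := hT (dAct ν) (by right; rfl)
    set f : PowerSeries ℂ := PowerSeries.mk
      (fun n => T (single ((0:ℤ),n) 1) ((0:ℤ),(0:ℕ)) / (n.factorial : ℂ)) with hf
    set R : Module.End ℂ FnuLog := T - phiFun f with hR
    have hRt : tAct * R = R * tAct := by
      apply LinearMap.ext
      intro x
      simp only [Module.End.mul_apply, hR, LinearMap.sub_apply, map_sub]
      rw [← Module.End.mul_apply tAct T, ht, ← Module.End.mul_apply tAct (phiFun f),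
        tAct_commute, Module.End.mul_apply, Module.End.mul_apply]
    have hRd : dAct ν * R = R * dAct ν := by
      apply LinearMap.ext
      intro x
      simp only [Module.End.mul_apply, hR, LinearMap.sub_apply, map_sub]
      rw [← Module.End.mul_apply (dAct ν) T, hd, ← Module.End.mul_apply (dAct ν) (phiFun f),
        dAct_commute, Module.End.mul_apply, Module.End.mul_apply]
    have hRθ : (tAct * dAct ν) * R = R * (tAct * dAct ν) := by
      rw [mul_assoc, hRd, ← mul_assoc, hRt, mul_assoc]
    have heval : ∀ m : ℕ, (R (single ((0:ℤ),m) 1)) ((0:ℤ),(0:ℕ)) = 0 := by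
      intro m
      rw [hR, LinearMap.sub_apply, Finsupp.sub_apply, phiFun_eval, hf,
        PowerSeries.coeff_mk, div_mul_cancel₀, sub_self]
      exact Nat.cast_ne_zero.mpr (Nat.factorial_ne_zero m)
    have main : ∀ (m : ℕ) (k : ℤ), R (single (k,m) 1) = 0 := by
      intro m
      induction m with
      | zero =>
        refine level_zero ν R hRt hRθ 0 (fun k => ?_) (heval 0)
        rw [Nat.cast_zero, zero_smul]
      | succ m ih =>
        refine level_zero ν R hRt hRθ (m+1) (fun k => ?_) (heval (m+1))
        rw [show m+1-1 = m from rfl, ih k, smul_zero]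
    have hR0 : R = 0 := by
      apply endExt
      intro k m
      rw [main m k, LinearMap.zero_apply]
    have hT2 : T = phiFun f := by
      apply LinearMap.ext
      intro x
      have h := DFunLike.congr_fun hR0 x
      rw [LinearMap.sub_apply, LinearMap.zero_apply] at h
      exact sub_eq_zero.mp h
    exact ⟨f, Subtype.ext hT2.symm⟩
  refine ⟨AlgEquiv.ofBijective Φ' ⟨hinj, hsurj⟩, ?_⟩
  have : ((Φ' PowerSeries.X : _) : Module.End ℂ FnuLog) = phiFun PowerSeries.X := rfl
  rw [show ((AlgEquiv.ofBijective Φ' ⟨hinj, hsurj⟩) PowerSeries.X) = Φ' PowerSeries.X from rfl,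
    this, phiFun_X]
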